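/- The Baernstein norm satisfies: ‖e₁‖_B = 1 and ‖(1/√2)(e₁ + e₂)‖_B = 1, yet ‖e₁ + e_n‖_B = √2 for every n ≥ 2, while ‖(1/√2)(e₁ + e₂) + e_n‖_B = √(2 + √2) for every n ≥ 3. In particular, the two limits lim_{n→∞} ‖e₁ + e_n‖_B and lim_{n→∞} ‖(1/√2)(e₁+e₂) + e_n‖_B are different although ‖e₁‖_B = ‖(1/√2)(e₁+e₂)‖_B. -/

import Mathlib

open Filter Topology

/-- A finite set of (positive) indices is admissible if it is nonempty and its cardinality
is at most its minimum. -/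
def BAdmissible (E : Finset ℕ) : Prop := E.Nonempty ∧ ∀ i ∈ E, E.card ≤ i

/-- The set of values whose supremum defines the Baernstein norm of a real sequence `x`:
all numbers `(∑_{j<k} (∑_{i ∈ E j} |x i|)²)^{1/2}` over finite increasing chains
`E 0 < E 1 < ... < E (k-1)` of admissible sets. -/
def baernsteinSet (x : ℕ → ℝ) : Set ℝ :=
  {r | ∃ (k : ℕ) (E : ℕ → Finset ℕ),
    (∀ j < k, BAdmissible (E j)) ∧
    (∀ j, j + 1 < k → ∀ a ∈ E j, ∀ b ∈ E (j + 1), a < b) ∧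
    r = Real.sqrt (∑ j ∈ Finset.range k, (∑ i ∈ E j, |x i|) ^ 2)}

/-- The Baernstein norm of a real sequence (as a supremum in `ℝ`). -/
noncomputable def baernsteinNorm (x : ℕ → ℝ) : ℝ := sSup (baernsteinSet x)

/-- The `i`-th standard unit sequence. -/
def unitSeq (i : ℕ) : ℕ → ℝ := fun j => if j = i then 1 else 0

lemma chainLt {k : ℕ} {E : ℕ → Finset ℕ}
    (hne : ∀ j < k, (E j).Nonempty)
    (ho : ∀ j, j + 1 < k → ∀ a ∈ E j, ∀ b ∈ E (j + 1), a < b) :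
    ∀ j j', j < j' → j' < k → ∀ a ∈ E j, ∀ b ∈ E j', a < b := by
  intro j j'
  induction j' with
  | zero => omega
  | succ m ih =>
    intro hjm hmk a ha b hb
    rcases eq_or_lt_of_le (Nat.lt_succ_iff.mp hjm) with h | h
    · exact ho m hmk a (h ▸ ha) b hb
    · obtain ⟨c, hc⟩ := hne m (by omega)
      exact lt_trans (ih h (by omega) a ha c hc) (ho m hmk c hc b hb)

lemma sumInd {k : ℕ} {E : ℕ → Finset ℕ}
    (hlt : ∀ j j', j < j' → j' < k → ∀ a ∈ E j, ∀ b ∈ E j', a < b)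
    (i : ℕ) {c : ℝ} (hc : 0 ≤ c) :
    ∑ j ∈ Finset.range k, (if i ∈ E j then c else 0) ≤ c := by
  classical
  rw [Finset.sum_ite, Finset.sum_const, Finset.sum_const_zero, add_zero, nsmul_eq_mul]
  have hcard : ((Finset.range k).filter (fun j => i ∈ E j)).card ≤ 1 := by
    apply Finset.card_le_one.mpr
    intro a ha b hb
    simp only [Finset.mem_filter, Finset.mem_range] at ha hb
    by_contra hne
    rcases Nat.lt_or_ge a b with h | h
    · exact lt_irrefl i (hlt a b h hb.1 i ha.2 i hb.2)
    · rcases Nat.lt_or_ge b a with h' | h'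
      · exact lt_irrefl i (hlt b a h' ha.1 i hb.2 i ha.2)
      · omega
  calc (((Finset.range k).filter (fun j => i ∈ E j)).card : ℝ) * c
      ≤ 1 * c := by
        apply mul_le_mul_of_nonneg_right _ hc
        exact_mod_cast hcard
    _ = c := one_mul c

lemma baernstein_general (p q : ℕ) (hp : 2 ≤ p) (hpq : p < q)
    (α β γ : ℝ) (hα : 0 ≤ α) (hβ : 0 ≤ β) (hγ : 0 ≤ γ)
    (x : ℕ → ℝ)
    (hx : ∀ i, |x i| = (if i = 1 then α else 0) + (if i = p then β else 0)
        + (if i = q then γ else 0)) :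
    baernsteinNorm x = Real.sqrt (α ^ 2 + β ^ 2 + γ ^ 2 + 2 * β * γ) := by
  classical
  have hp1 : p ≠ 1 := by omega
  have hq1 : q ≠ 1 := by omega
  have hpqne : p ≠ q := by omega
  -- the witness value is in the set
  have hmem : Real.sqrt (α ^ 2 + β ^ 2 + γ ^ 2 + 2 * β * γ) ∈ baernsteinSet x := by
    refine ⟨2, fun j => if j = 0 then {1} else {p, q}, ?_, ?_, ?_⟩
    · intro j hj
      by_cases h0 : j = 0
      · simp [h0, BAdmissible]
      · have hcard : ({p, q} : Finset ℕ).card = 2 := by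
          rw [Finset.card_insert_of_notMem (by simp [hpqne]), Finset.card_singleton]
        show BAdmissible (if j = 0 then ({1}:Finset ℕ) else {p, q})
        rw [if_neg h0]
        refine ⟨⟨p, by simp⟩, ?_⟩
        intro i hi
        simp only [Finset.mem_insert, Finset.mem_singleton] at hi
        rcases hi with rfl | rfl <;> omega
    · intro j hj a ha b hb
      have hj0 : j = 0 := by omega
      subst hj0
      have ha' : a = 1 := by simpa using ha
      have hb' : b = p ∨ b = q := by simpa using hb
      rcases hb' with rfl | rfl <;> omega
    · have h0 : ∑ i ∈ ({1} : Finset ℕ), |x i| = α := by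
        rw [Finset.sum_singleton, hx 1]
        simp [hp1.symm, hq1.symm, Ne.symm hp1, Ne.symm hq1]
      have h1 : ∑ i ∈ ({p, q} : Finset ℕ), |x i| = β + γ := by
        rw [Finset.sum_pair hpqne, hx p, hx q]
        simp [hp1, hq1, hpqne, hpqne.symm]
      rw [Finset.sum_range_succ, Finset.sum_range_succ, Finset.sum_range_zero]
      beta_reduce
      rw [show (if (0:ℕ) = 0 then ({1}:Finset ℕ) else {p, q}) = {1} from rfl,
        show (if (1:ℕ) = 0 then ({1}:Finset ℕ) else {p, q}) = {p, q} from rfl,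
        h0, h1, zero_add]
      congr 1
      ring
  -- upper bound
  have hub : ∀ r ∈ baernsteinSet x, r ≤ Real.sqrt (α ^ 2 + β ^ 2 + γ ^ 2 + 2 * β * γ) := by
    rintro r ⟨k, E, hadm, ho, rfl⟩
    apply Real.sqrt_le_sqrt
    have hne : ∀ j < k, (E j).Nonempty := fun j hj => (hadm j hj).1
    have hlt := chainLt hne ho
    have hpt : ∀ j ∈ Finset.range k, (∑ i ∈ E j, |x i|) ^ 2 ≤
        (if 1 ∈ E j then α ^ 2 else 0) + (if p ∈ E j then β ^ 2 else 0)
        + (if q ∈ E j then γ ^ 2 else 0)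
        + (if p ∈ E j then (if q ∈ E j then 2 * β * γ else 0) else 0) := by
      intro j hj
      rw [Finset.mem_range] at hj
      have hsum : ∑ i ∈ E j, |x i| = (if 1 ∈ E j then α else 0)
          + (if p ∈ E j then β else 0) + (if q ∈ E j then γ else 0) := by
        simp only [hx]
        rw [Finset.sum_add_distrib, Finset.sum_add_distrib,
          Finset.sum_ite_eq' (E j) 1 (fun _ => α),
          Finset.sum_ite_eq' (E j) p (fun _ => β),
          Finset.sum_ite_eq' (E j) q (fun _ => γ)]
      have hcard := (hadm j hj).2
      have h1p : ¬(1 ∈ E j ∧ p ∈ E j) := by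
        rintro ⟨h1, hpp⟩
        have : 1 < (E j).card := Finset.one_lt_card.mpr ⟨1, h1, p, hpp, Ne.symm hp1⟩
        have := hcard 1 h1
        omega
      have h1q : ¬(1 ∈ E j ∧ q ∈ E j) := by
        rintro ⟨h1, hqq⟩
        have : 1 < (E j).card := Finset.one_lt_card.mpr ⟨1, h1, q, hqq, Ne.symm hq1⟩
        have := hcard 1 h1
        omega
      rw [hsum]
      by_cases h1 : 1 ∈ E j
      · have hpp : p ∉ E j := fun h => h1p ⟨h1, h⟩
        have hqq : q ∉ E j := fun h => h1q ⟨h1, h⟩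
        simp only [h1, hpp, hqq, if_true, if_false, if_pos, if_neg, not_false_iff]
        nlinarith
      · by_cases hpp : p ∈ E j <;> by_cases hqq : q ∈ E j <;>
          simp [h1, hpp, hqq] <;> nlinarith
    calc ∑ j ∈ Finset.range k, (∑ i ∈ E j, |x i|) ^ 2
        ≤ ∑ j ∈ Finset.range k, ((if 1 ∈ E j then α ^ 2 else 0)
            + (if p ∈ E j then β ^ 2 else 0) + (if q ∈ E j then γ ^ 2 else 0)
            + (if p ∈ E j then (if q ∈ E j then 2 * β * γ else 0) else 0)) :=
          Finset.sum_le_sum hpt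
      _ = (∑ j ∈ Finset.range k, (if 1 ∈ E j then α ^ 2 else 0))
            + (∑ j ∈ Finset.range k, (if p ∈ E j then β ^ 2 else 0))
            + (∑ j ∈ Finset.range k, (if q ∈ E j then γ ^ 2 else 0))
            + (∑ j ∈ Finset.range k,
                (if p ∈ E j then (if q ∈ E j then 2 * β * γ else 0) else 0)) := by
          rw [← Finset.sum_add_distrib, ← Finset.sum_add_distrib, ← Finset.sum_add_distrib]
      _ ≤ α ^ 2 + β ^ 2 + γ ^ 2 + 2 * β * γ := by
          gcongr
          · exact sumInd hlt 1 (by positivity)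
          · exact sumInd hlt p (by positivity)
          · exact sumInd hlt q (by positivity)
          · calc ∑ j ∈ Finset.range k,
                  (if p ∈ E j then (if q ∈ E j then 2 * β * γ else 0) else 0)
                ≤ ∑ j ∈ Finset.range k, (if p ∈ E j then 2 * β * γ else 0) := by
                  apply Finset.sum_le_sum
                  intro j hj
                  split_ifs <;> first | exact le_rfl | positivity
              _ ≤ 2 * β * γ := sumInd hlt p (by positivity)
  unfold baernsteinNorm
  exact le_antisymm (csSup_le ⟨_, hmem⟩ hub) (le_csSup ⟨_, hub⟩ hmem)

theorem baernstein_fails_MStar_witness :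
    baernsteinNorm (unitSeq 1) = 1 ∧
    baernsteinNorm (fun j => (1 / Real.sqrt 2) * (unitSeq 1 j + unitSeq 2 j)) = 1 ∧
    (∀ n, 2 ≤ n → baernsteinNorm (fun j => unitSeq 1 j + unitSeq n j) = Real.sqrt 2) ∧
    (∀ n, 3 ≤ n →
      baernsteinNorm (fun j => (1 / Real.sqrt 2) * (unitSeq 1 j + unitSeq 2 j) + unitSeq n j)
        = Real.sqrt (2 + Real.sqrt 2)) ∧
    Real.sqrt 2 ≠ Real.sqrt (2 + Real.sqrt 2) := by
  have hs2 : (0:ℝ) < Real.sqrt 2 := Real.sqrt_pos.mpr (by norm_num)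
  have hsq : Real.sqrt 2 ^ 2 = 2 := Real.sq_sqrt (by norm_num)
  have hinv : (0:ℝ) ≤ 1 / Real.sqrt 2 := by positivity
  refine ⟨?_, ?_, ?_, ?_, ?_⟩
  · rw [baernstein_general 2 3 (le_refl 2) (by norm_num) 1 0 0 (by norm_num) le_rfl le_rfl _
      (by intro i; simp only [unitSeq]; split_ifs <;> first | omega | norm_num)]
    norm_num
  · rw [baernstein_general 2 3 (le_refl 2) (by norm_num) (1 / Real.sqrt 2) (1 / Real.sqrt 2) 0
      hinv hinv le_rfl _
      (by intro i; simp only [unitSeq]; split_ifs <;>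
        first | omega | (rw [abs_of_nonneg (by positivity)]; ring))]
    rw [show (1 / Real.sqrt 2) ^ 2 + (1 / Real.sqrt 2) ^ 2 + 0 ^ 2 + 2 * (1 / Real.sqrt 2) * 0
        = 1 by field_simp; rw [hsq]; ring]
    exact Real.sqrt_one
  · intro n hn
    rw [baernstein_general n (n + 1) hn (by omega) 1 1 0 (by norm_num) (by norm_num) le_rfl _
      (by intro i; simp only [unitSeq]; split_ifs <;>
        first | omega | (rw [abs_of_nonneg (by positivity)]; ring) | norm_num)]
    norm_num
  · intro n hn
    rw [baernstein_general 2 n (le_refl 2) (by omega) (1 / Real.sqrt 2) (1 / Real.sqrt 2) 1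
      hinv hinv (by norm_num) _
      (by intro i; simp only [unitSeq]; split_ifs <;>
        first | omega | (rw [abs_of_nonneg (by positivity)]; ring))]
    rw [show (1 / Real.sqrt 2) ^ 2 + (1 / Real.sqrt 2) ^ 2 + 1 ^ 2 + 2 * (1 / Real.sqrt 2) * 1
        = 2 + Real.sqrt 2 by field_simp; nlinarith]
  · intro h
    have h1 : Real.sqrt 2 < Real.sqrt (2 + Real.sqrt 2) :=
      Real.sqrt_lt_sqrt (by norm_num) (by linarith)
    exact absurd h (ne_of_lt h1)
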